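/- For all x with 0 ≤ x ≤ 1, h₂⁻¹(x) ≥ (1/2)(1 - √(2 ln 2 · (1-x))), where h₂⁻¹ : [0,1] → [0,1/2] is the inverse of the binary entropy function restricted to [0,1/2]. -/

import Mathlib

open Real

-- derivative helper: F t = 4*t - log t + log (1-t)
lemma lemA (p : ℝ) (hp : 0 < p) (hp2 : p ≤ 1/2) :
    4*p - 2 - Real.log p + Real.log (1-p) ≥ 0 := by
  set F : ℝ → ℝ := fun t => 4*t - Real.log t + Real.log (1-t) with hF
  have key : AntitoneOn F (Set.Icc p (1/2)) := by
    apply antitoneOn_of_deriv_nonpos (convex_Icc _ _)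
    · apply ContinuousOn.add
      apply ContinuousOn.sub
      · exact (continuous_const.mul continuous_id).continuousOn
      · apply Real.continuousOn_log.comp continuous_id.continuousOn
        intro t ht
        exact ne_of_gt (lt_of_lt_of_le hp ht.1)
      · apply Real.continuousOn_log.comp (continuous_const.sub continuous_id).continuousOn
        intro t ht
        have : t < 1 := lt_of_le_of_lt ht.2 (by norm_num)
        simp only [Set.mem_compl_iff, Set.mem_singleton_iff]
        intro h; simp at h; linarith
    · intro t ht
      rw [interior_Icc] at ht
      have ht0 : 0 < t := lt_trans hp ht.1
      have ht1 : t < 1 := lt_trans ht.2 (by norm_num)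
      have hd : HasDerivAt F (4 - t⁻¹ + (-(1-t)⁻¹)) t := by
        have h1 : HasDerivAt (fun t : ℝ => 4*t) 4 t := by
          simpa using (hasDerivAt_id t).const_mul (4:ℝ)
        have h2 : HasDerivAt Real.log t⁻¹ t := Real.hasDerivAt_log (ne_of_gt ht0)
        have h3 : HasDerivAt (fun t : ℝ => Real.log (1-t)) (-(1-t)⁻¹) t := by
          have := (Real.hasDerivAt_log (by linarith : (1:ℝ)-t ≠ 0)).comp t
            ((hasDerivAt_const t (1:ℝ)).sub (hasDerivAt_id t))
          simpa [Function.comp_def] using this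
        exact (h1.sub h2).add h3
      exact (hd.differentiableAt).differentiableWithinAt
    · intro t ht
      rw [interior_Icc] at ht
      have ht0 : 0 < t := lt_trans hp ht.1
      have ht1 : t < 1 := lt_trans ht.2 (by norm_num)
      have hd : HasDerivAt F (4 - t⁻¹ + (-(1-t)⁻¹)) t := by
        have h1 : HasDerivAt (fun t : ℝ => 4*t) 4 t := by
          simpa using (hasDerivAt_id t).const_mul (4:ℝ)
        have h2 : HasDerivAt Real.log t⁻¹ t := Real.hasDerivAt_log (ne_of_gt ht0)
        have h3 : HasDerivAt (fun t : ℝ => Real.log (1-t)) (-(1-t)⁻¹) t := by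
          have := (Real.hasDerivAt_log (by linarith : (1:ℝ)-t ≠ 0)).comp t
            ((hasDerivAt_const t (1:ℝ)).sub (hasDerivAt_id t))
          simpa [Function.comp_def] using this
        exact (h1.sub h2).add h3
      rw [hd.deriv]
      have h1 : t * t⁻¹ = 1 := mul_inv_cancel₀ (ne_of_gt ht0)
      have h2 : (1-t) * (1-t)⁻¹ = 1 := mul_inv_cancel₀ (by linarith)
      nlinarith [sq_nonneg (t - 1/2), mul_pos ht0 (by linarith : (0:ℝ) < 1 - t),
        mul_pos (inv_pos.mpr ht0) (inv_pos.mpr (by linarith : (0:ℝ) < 1 - t))]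
  have := key ⟨le_refl p, hp2⟩ ⟨hp2, le_refl _⟩ hp2
  simp only [hF] at this
  have hl : Real.log (1 - 1/2) = Real.log (1/2) := by norm_num
  -- F p ≥ F (1/2) = 2
  have : F (1/2) ≤ F p := this
  simp only [hF] at this
  norm_num at this
  linarith


lemma hasDerivAt_g (t : ℝ) (ht0 : 0 < t) (ht1 : t < 1) :
    HasDerivAt (fun t => t * Real.log t + (1-t) * Real.log (1-t) + Real.log 2 - 2*(t-1/2)^2)
      (Real.log t - Real.log (1-t) - 4*t + 2) t := by
  have h1 : HasDerivAt (fun x : ℝ => x * Real.log x) (Real.log t + 1) t :=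
    Real.hasDerivAt_mul_log ht0.ne'
  have h2 : HasDerivAt (fun x : ℝ => (1-x) * Real.log (1-x)) (-(Real.log (1-t) + 1)) t := by
    have := (Real.hasDerivAt_mul_log (show (1:ℝ)-t ≠ 0 by linarith)).comp t
      ((hasDerivAt_const t (1:ℝ)).sub (hasDerivAt_id t))
    refine this.congr_deriv ?_
    simp
  have h3 : HasDerivAt (fun x : ℝ => 2*(x-1/2)^2) (2*(2*(t-1/2))) t := by
    have := (((hasDerivAt_id t).sub_const (1/2)).pow 2).const_mul (2:ℝ)
    refine this.congr_deriv ?_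
    simp
  have := ((h1.add h2).add_const (Real.log 2)).sub h3
  refine this.congr_deriv ?_
  ring

lemma lemB (p : ℝ) (hp : 0 ≤ p) (hp2 : p ≤ 1/2) :
    p * Real.log p + (1-p) * Real.log (1-p) + Real.log 2 - 2*(p-1/2)^2 ≥ 0 := by
  rcases eq_or_lt_of_le hp with h0 | h0
  · -- p = 0
    rw [← h0]
    simp
    nlinarith [Real.log_two_gt_d9]
  set g : ℝ → ℝ := fun t => t * Real.log t + (1-t) * Real.log (1-t) + Real.log 2 - 2*(t-1/2)^2
    with hg
  have key : AntitoneOn g (Set.Icc p (1/2)) := by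
    apply antitoneOn_of_deriv_nonpos (convex_Icc _ _)
    · apply ContinuousOn.sub
      apply ContinuousOn.add
      apply ContinuousOn.add
      · apply ContinuousOn.mul continuousOn_id
        apply Real.continuousOn_log.comp continuousOn_id
        intro t ht
        exact ne_of_gt (lt_of_lt_of_le h0 ht.1)
      · apply ContinuousOn.mul (continuous_const.sub continuous_id).continuousOn
        apply Real.continuousOn_log.comp (continuous_const.sub continuous_id).continuousOn
        intro t ht
        have : t < 1 := lt_of_le_of_lt ht.2 (by norm_num)
        simp only [Set.mem_compl_iff, Set.mem_singleton_iff]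
        intro h; simp at h; linarith
      · exact continuousOn_const
      · exact (continuous_const.mul ((continuous_id.sub continuous_const).pow 2)).continuousOn
    · intro t ht
      rw [interior_Icc] at ht
      have ht0 : 0 < t := lt_trans h0 ht.1
      have ht1 : t < 1 := lt_trans ht.2 (by norm_num)
      exact (hasDerivAt_g t ht0 ht1).differentiableAt.differentiableWithinAt
    · intro t ht
      rw [interior_Icc] at ht
      have ht0 : 0 < t := lt_trans h0 ht.1
      have ht1 : t < 1 := lt_trans ht.2 (by norm_num)
      rw [hg, (hasDerivAt_g t ht0 ht1).deriv]
      have := lemA t ht0 (le_of_lt ht.2)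
      linarith
  have h12 := key ⟨le_refl p, hp2⟩ ⟨hp2, le_refl _⟩ hp2
  have hgval : g (1/2) = 0 := by
    simp only [hg]
    rw [show (1:ℝ) - 1/2 = 1/2 by norm_num, show (1:ℝ)/2 = 2⁻¹ by norm_num, Real.log_inv]
    ring
  rw [hgval] at h12
  exact h12

noncomputable def h2 (x : ℝ) : ℝ := -(x * Real.logb 2 x) - (1 - x) * Real.logb 2 (1 - x)

theorem stmt_5 (h2inv : ℝ → ℝ)
    (hspec : ∀ y, 0 ≤ y → y ≤ 1 →
      0 ≤ h2inv y ∧ h2inv y ≤ 1 / 2 ∧ h2 (h2inv y) = y)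
    (x : ℝ) (hx0 : 0 ≤ x) (hx1 : x ≤ 1) :
    h2inv x ≥ (1 / 2) * (1 - Real.sqrt (2 * Real.log 2 * (1 - x))) := by
  obtain ⟨hp0, hp2, hpx⟩ := hspec x hx0 hx1
  set p := h2inv x with hpdef
  have hlog2 : Real.log 2 ≠ 0 := ne_of_gt (Real.log_pos one_lt_two)
  have hsum : p * Real.log p + (1-p)*Real.log (1-p) = -(x * Real.log 2) := by
    have hx := hpx
    simp only [h2, Real.logb] at hx
    field_simp at hx
    have h' : Real.log 2 * (p * Real.log p + (1-p)*Real.log (1-p) + x * Real.log 2) = 0 := by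
      ring_nf
      ring_nf at hx
      linear_combination (-Real.log 2) * hx
    rcases mul_eq_zero.mp h' with h | h
    · exact absurd h hlog2
    · linarith
  have hB := lemB p hp0 hp2
  have hsq : (1-2*p)^2 ≤ 2*Real.log 2*(1-x) := by nlinarith
  have hsqrt : 1 - 2*p ≤ Real.sqrt (2*Real.log 2*(1-x)) := by
    have := Real.sqrt_le_sqrt hsq
    rwa [Real.sqrt_sq (by linarith : (0:ℝ) ≤ 1-2*p)] at this
  linarith
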